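/- Let M be the symmetric intersection matrix of the configuration: a chain of m−2 vertices of weight 2, followed by a weight-a₀ vertex at the center of a D-type tail, in the specific pattern b) of section 3.17: ⋯—∘(3)—∘(2)—⋯—∘(2)—∘(3)—∘(a₀=2)—∘(2)—∘(2) with ∘(2)—•(1) attached below the a₀-vertex, for any chain length k ≥ 1 between the two weight-3 vertices. Then M is not negative definite; hence this configuration of curves is not contractible to a point. -/
import Mathlib

def bVec (k m : ℕ) : ℚ :=
  if m = k+1 then 1 else if m = k+2 then 3 else if m = k+3 then 2
  else if m = k+4 then 1 else if m = k+5 then 3 else if m = k+6 then 3 else 0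

def bMat (k a b : ℕ) : ℚ :=
  if a = b then
    -(if a = 0 ∨ a = k + 1 then (3 : ℚ)
      else if a = k + 6 then 1 else 2)
  else if (a + 1 = b ∧ b ≤ k + 4) ∨ (b + 1 = a ∧ a ≤ k + 4)
      ∨ (a = k + 2 ∧ b = k + 5) ∨ (a = k + 5 ∧ b = k + 2)
      ∨ (a = k + 5 ∧ b = k + 6) ∨ (a = k + 6 ∧ b = k + 5)
    then 1 else 0

lemma bVec_lt (k m : ℕ) (h : m < k+1) : bVec k m = 0 := by
  unfold bVec; split_ifs <;> first | (exfalso; omega) | rfl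

lemma sum_split17 (k : ℕ) (g : ℕ → ℚ) (h0 : ∀ m, m < k+1 → g m = 0) :
    ∑ m ∈ Finset.range (k+7), g m
      = g (k+1) + g (k+2) + g (k+3) + g (k+4) + g (k+5) + g (k+6) := by
  rw [Finset.sum_range_succ, Finset.sum_range_succ, Finset.sum_range_succ,
    Finset.sum_range_succ, Finset.sum_range_succ, Finset.sum_range_succ,
    Finset.sum_eq_zero (fun m hm => h0 m (Finset.mem_range.mp hm))]
  ring

lemma bV1 (k : ℕ) : bVec k (k+1) = 1 := by
  unfold bVec; split_ifs <;> first | (exfalso; omega) | (exfalso; simp only [false_or] at *; omega) | norm_num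

lemma bV2 (k : ℕ) : bVec k (k+2) = 3 := by
  unfold bVec; split_ifs <;> first | (exfalso; omega) | (exfalso; simp only [false_or] at *; omega) | norm_num

lemma bV3 (k : ℕ) : bVec k (k+3) = 2 := by
  unfold bVec; split_ifs <;> first | (exfalso; omega) | (exfalso; simp only [false_or] at *; omega) | norm_num

lemma bV4 (k : ℕ) : bVec k (k+4) = 1 := by
  unfold bVec; split_ifs <;> first | (exfalso; omega) | (exfalso; simp only [false_or] at *; omega) | norm_num

lemma bV5 (k : ℕ) : bVec k (k+5) = 3 := by
  unfold bVec; split_ifs <;> first | (exfalso; omega) | (exfalso; simp only [false_or] at *; omega) | norm_num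

lemma bV6 (k : ℕ) : bVec k (k+6) = 3 := by
  unfold bVec; split_ifs <;> first | (exfalso; omega) | (exfalso; simp only [false_or] at *; omega) | norm_num

lemma bM11 (k : ℕ) : bMat k (k+1) (k+1) = -3 := by
  unfold bMat; split_ifs <;> first | (exfalso; omega) | (exfalso; simp only [false_or] at *; omega) | norm_num

lemma bM12 (k : ℕ) : bMat k (k+1) (k+2) = 1 := by
  unfold bMat; split_ifs <;> first | (exfalso; omega) | (exfalso; simp only [false_or] at *; omega) | norm_num

lemma bM13 (k : ℕ) : bMat k (k+1) (k+3) = 0 := by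
  unfold bMat; split_ifs <;> first | (exfalso; omega) | (exfalso; simp only [false_or] at *; omega) | norm_num

lemma bM14 (k : ℕ) : bMat k (k+1) (k+4) = 0 := by
  unfold bMat; split_ifs <;> first | (exfalso; omega) | (exfalso; simp only [false_or] at *; omega) | norm_num

lemma bM15 (k : ℕ) : bMat k (k+1) (k+5) = 0 := by
  unfold bMat; split_ifs <;> first | (exfalso; omega) | (exfalso; simp only [false_or] at *; omega) | norm_num

lemma bM16 (k : ℕ) : bMat k (k+1) (k+6) = 0 := by
  unfold bMat; split_ifs <;> first | (exfalso; omega) | (exfalso; simp only [false_or] at *; omega) | norm_num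

lemma bM21 (k : ℕ) : bMat k (k+2) (k+1) = 1 := by
  unfold bMat; split_ifs <;> first | (exfalso; omega) | (exfalso; simp only [false_or] at *; omega) | norm_num

lemma bM22 (k : ℕ) : bMat k (k+2) (k+2) = -2 := by
  unfold bMat; split_ifs <;> first | (exfalso; omega) | (exfalso; simp only [false_or] at *; omega) | norm_num

lemma bM23 (k : ℕ) : bMat k (k+2) (k+3) = 1 := by
  unfold bMat; split_ifs <;> first | (exfalso; omega) | (exfalso; simp only [false_or] at *; omega) | norm_num

lemma bM24 (k : ℕ) : bMat k (k+2) (k+4) = 0 := by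
  unfold bMat; split_ifs <;> first | (exfalso; omega) | (exfalso; simp only [false_or] at *; omega) | norm_num

lemma bM25 (k : ℕ) : bMat k (k+2) (k+5) = 1 := by
  unfold bMat; split_ifs <;> first | (exfalso; omega) | (exfalso; simp only [false_or] at *; omega) | norm_num

lemma bM26 (k : ℕ) : bMat k (k+2) (k+6) = 0 := by
  unfold bMat; split_ifs <;> first | (exfalso; omega) | (exfalso; simp only [false_or] at *; omega) | norm_num

lemma bM31 (k : ℕ) : bMat k (k+3) (k+1) = 0 := by
  unfold bMat; split_ifs <;> first | (exfalso; omega) | (exfalso; simp only [false_or] at *; omega) | norm_num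

lemma bM32 (k : ℕ) : bMat k (k+3) (k+2) = 1 := by
  unfold bMat; split_ifs <;> first | (exfalso; omega) | (exfalso; simp only [false_or] at *; omega) | norm_num

lemma bM33 (k : ℕ) : bMat k (k+3) (k+3) = -2 := by
  unfold bMat; split_ifs <;> first | (exfalso; omega) | (exfalso; simp only [false_or] at *; omega) | norm_num

lemma bM34 (k : ℕ) : bMat k (k+3) (k+4) = 1 := by
  unfold bMat; split_ifs <;> first | (exfalso; omega) | (exfalso; simp only [false_or] at *; omega) | norm_num

lemma bM35 (k : ℕ) : bMat k (k+3) (k+5) = 0 := by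
  unfold bMat; split_ifs <;> first | (exfalso; omega) | (exfalso; simp only [false_or] at *; omega) | norm_num

lemma bM36 (k : ℕ) : bMat k (k+3) (k+6) = 0 := by
  unfold bMat; split_ifs <;> first | (exfalso; omega) | (exfalso; simp only [false_or] at *; omega) | norm_num

lemma bM41 (k : ℕ) : bMat k (k+4) (k+1) = 0 := by
  unfold bMat; split_ifs <;> first | (exfalso; omega) | (exfalso; simp only [false_or] at *; omega) | norm_num

lemma bM42 (k : ℕ) : bMat k (k+4) (k+2) = 0 := by
  unfold bMat; split_ifs <;> first | (exfalso; omega) | (exfalso; simp only [false_or] at *; omega) | norm_num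

lemma bM43 (k : ℕ) : bMat k (k+4) (k+3) = 1 := by
  unfold bMat; split_ifs <;> first | (exfalso; omega) | (exfalso; simp only [false_or] at *; omega) | norm_num

lemma bM44 (k : ℕ) : bMat k (k+4) (k+4) = -2 := by
  unfold bMat; split_ifs <;> first | (exfalso; omega) | (exfalso; simp only [false_or] at *; omega) | norm_num

lemma bM45 (k : ℕ) : bMat k (k+4) (k+5) = 0 := by
  unfold bMat; split_ifs <;> first | (exfalso; omega) | (exfalso; simp only [false_or] at *; omega) | norm_num

lemma bM46 (k : ℕ) : bMat k (k+4) (k+6) = 0 := by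
  unfold bMat; split_ifs <;> first | (exfalso; omega) | (exfalso; simp only [false_or] at *; omega) | norm_num

lemma bM51 (k : ℕ) : bMat k (k+5) (k+1) = 0 := by
  unfold bMat; split_ifs <;> first | (exfalso; omega) | (exfalso; simp only [false_or] at *; omega) | norm_num

lemma bM52 (k : ℕ) : bMat k (k+5) (k+2) = 1 := by
  unfold bMat; split_ifs <;> first | (exfalso; omega) | (exfalso; simp only [false_or] at *; omega) | norm_num

lemma bM53 (k : ℕ) : bMat k (k+5) (k+3) = 0 := by
  unfold bMat; split_ifs <;> first | (exfalso; omega) | (exfalso; simp only [false_or] at *; omega) | norm_num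

lemma bM54 (k : ℕ) : bMat k (k+5) (k+4) = 0 := by
  unfold bMat; split_ifs <;> first | (exfalso; omega) | (exfalso; simp only [false_or] at *; omega) | norm_num

lemma bM55 (k : ℕ) : bMat k (k+5) (k+5) = -2 := by
  unfold bMat; split_ifs <;> first | (exfalso; omega) | (exfalso; simp only [false_or] at *; omega) | norm_num

lemma bM56 (k : ℕ) : bMat k (k+5) (k+6) = 1 := by
  unfold bMat; split_ifs <;> first | (exfalso; omega) | (exfalso; simp only [false_or] at *; omega) | norm_num

lemma bM61 (k : ℕ) : bMat k (k+6) (k+1) = 0 := by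
  unfold bMat; split_ifs <;> first | (exfalso; omega) | (exfalso; simp only [false_or] at *; omega) | norm_num

lemma bM62 (k : ℕ) : bMat k (k+6) (k+2) = 0 := by
  unfold bMat; split_ifs <;> first | (exfalso; omega) | (exfalso; simp only [false_or] at *; omega) | norm_num

lemma bM63 (k : ℕ) : bMat k (k+6) (k+3) = 0 := by
  unfold bMat; split_ifs <;> first | (exfalso; omega) | (exfalso; simp only [false_or] at *; omega) | norm_num

lemma bM64 (k : ℕ) : bMat k (k+6) (k+4) = 0 := by
  unfold bMat; split_ifs <;> first | (exfalso; omega) | (exfalso; simp only [false_or] at *; omega) | norm_num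

lemma bM65 (k : ℕ) : bMat k (k+6) (k+5) = 1 := by
  unfold bMat; split_ifs <;> first | (exfalso; omega) | (exfalso; simp only [false_or] at *; omega) | norm_num

lemma bM66 (k : ℕ) : bMat k (k+6) (k+6) = -1 := by
  unfold bMat; split_ifs <;> first | (exfalso; omega) | (exfalso; simp only [false_or] at *; omega) | norm_num


/-- Configuration b) of section 3.17: a chain
`∘(3)—∘(2)—⋯—∘(2)—∘(3)—∘(a₀=2)—∘(2)—∘(2)` with `k ≥ 1` weight-2 vertices between
the two weight-3 vertices, and a tail `∘(2)—•(1)` attached below the `a₀`-vertex.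
Its intersection matrix `M` (with `M j j = -aⱼ` and `M i j = 1` for adjacent
vertices) is not negative definite; hence the configuration is not contractible to
a point. Indices: `0` is the left weight-3 vertex, `1..k` the middle chain,
`k+1` the right weight-3 vertex, `k+2` the `a₀`-vertex, `k+3, k+4` the two
weight-2 vertices after it, `k+5` the weight-2 vertex below `a₀`, and `k+6` the
`(-1)`-curve. -/
theorem stmt_16 (k : ℕ) (hk : 1 ≤ k)
    (M : Matrix (Fin (k + 7)) (Fin (k + 7)) ℚ)
    (hM : ∀ i j : Fin (k + 7), M i j =
      if i = j then
        -(if i.val = 0 ∨ i.val = k + 1 then (3 : ℚ)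
          else if i.val = k + 6 then 1 else 2)
      else if (i.val + 1 = j.val ∧ j.val ≤ k + 4) ∨ (j.val + 1 = i.val ∧ i.val ≤ k + 4)
          ∨ (i.val = k + 2 ∧ j.val = k + 5) ∨ (i.val = k + 5 ∧ j.val = k + 2)
          ∨ (i.val = k + 5 ∧ j.val = k + 6) ∨ (i.val = k + 6 ∧ j.val = k + 5)
        then 1 else 0) :
    ¬ ∀ x : Fin (k + 7) → ℚ, x ≠ 0 → ∑ i, ∑ j, x i * M i j * x j < 0 := by
  intro H
  have hMN : ∀ i j : Fin (k+7), M i j = bMat k i.val j.val := by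
    intro i j
    rw [hM]
    unfold bMat
    simp only [Fin.ext_iff]
  have hx : (fun i : Fin (k+7) => bVec k i.val) ≠ 0 := by
    intro h
    have h1 := congrFun h ⟨k+1, by omega⟩
    rw [Pi.zero_apply] at h1
    rw [show ((⟨k+1, by omega⟩ : Fin (k+7)) : ℕ) = k+1 from rfl, bV1] at h1
    exact one_ne_zero h1
  have hlt := H _ hx
  have key : (∑ i, ∑ j, bVec k (i : Fin (k+7)).val * M i j * bVec k (j : Fin (k+7)).val) = 0 := by
    have step1 : ∀ i : Fin (k+7), (∑ j, bVec k i.val * M i j * bVec k j.val)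
        = ∑ m ∈ Finset.range (k+7), bVec k i.val * bMat k i.val m * bVec k m := by
      intro i
      rw [← Fin.sum_univ_eq_sum_range (fun m => bVec k i.val * bMat k i.val m * bVec k m) (k+7)]
      exact Finset.sum_congr rfl fun j _ => by rw [hMN]
    have hG : ∀ a : ℕ, (∑ m ∈ Finset.range (k+7), bVec k a * bMat k a m * bVec k m)
        = bVec k a * (bMat k a (k+1) * 1 + bMat k a (k+2) * 3 + bMat k a (k+3) * 2
          + bMat k a (k+4) * 1 + bMat k a (k+5) * 3 + bMat k a (k+6) * 3) := by
      intro a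
      rw [sum_split17 k _ (fun m hm => by rw [bVec_lt k m hm]; ring),
        bV1, bV2, bV3, bV4, bV5, bV6]
      ring
    calc (∑ i, ∑ j, bVec k (i : Fin (k+7)).val * M i j * bVec k (j : Fin (k+7)).val)
        = ∑ i : Fin (k+7), ∑ m ∈ Finset.range (k+7),
            bVec k i.val * bMat k i.val m * bVec k m :=
          Finset.sum_congr rfl fun i _ => step1 i
      _ = ∑ a ∈ Finset.range (k+7), ∑ m ∈ Finset.range (k+7),
            bVec k a * bMat k a m * bVec k m :=
          Fin.sum_univ_eq_sum_range
            (fun a => ∑ m ∈ Finset.range (k+7), bVec k a * bMat k a m * bVec k m) (k+7)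
      _ = 0 := by
          rw [sum_split17 k _ (fun a ha => Finset.sum_eq_zero fun m _ => by
            rw [bVec_lt k a ha]; ring)]
          rw [hG (k+1), hG (k+2), hG (k+3), hG (k+4), hG (k+5), hG (k+6),
            bV1, bV2, bV3, bV4, bV5, bV6,
            bM11,
            bM12,
            bM13,
            bM14,
            bM15,
            bM16,
            bM21,
            bM22,
            bM23,
            bM24,
            bM25,
            bM26,
            bM31,
            bM32,
            bM33,
            bM34,
            bM35,
            bM36,
            bM41,
            bM42,
            bM43,
            bM44,
            bM45,
            bM46,
            bM51,
            bM52,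
            bM53,
            bM54,
            bM55,
            bM56,
            bM61,
            bM62,
            bM63,
            bM64,
            bM65,
            bM66]
          norm_num
  rw [key] at hlt
  exact lt_irrefl 0 hlt
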